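/- Let s be a periodic sequence over GF(2^m) of period n with n | 2^m − 1, and let S be its DFT with respect to a primitive n-th root of unity. The linear complexity (length of the shortest LFSR over GF(2^m) generating s) equals the number of nonzero components of S. -/
import Mathlib

open Finset Polynomial

private lemma blahut_per {F : Type*} [AddCommMonoid F] {n : ℕ} {s : ℕ → F}
    (hper : ∀ t, s (t + n) = s t) (t : ℕ) : s t = s (t % n) := by
  conv_lhs => rw [← Nat.mod_add_div' t n]
  generalize t % n = r
  induction t / n with
  | zero => simp
  | succ q ih => rw [add_mul, one_mul, ← add_assoc, hper, ih]

private lemma blahut_geom {F : Type*} [Field F] {n : ℕ} {β : F} (hβn : β ^ n = 1)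
    (hβ : β ≠ 1) : ∑ k ∈ Finset.range n, β ^ k = 0 := by
  have h := geom_sum_mul β n
  rw [hβn, sub_self] at h
  rcases mul_eq_zero.mp h with h | h
  · exact h
  · exact absurd (sub_eq_zero.mp h) hβ

/-- Blahut's theorem: for a sequence `s` of period `n` over `GF(2^m)` with
`n ∣ 2^m - 1`, the linear complexity (the least `L` such that some LFSR of
length `L` over `F` generates `s`) equals the number of nonzero DFT
components. -/
theorem stmt_18 {F : Type*} [Field F] [Fintype F] [DecidableEq F]
    (m n : ℕ) (hcard : Fintype.card F = 2 ^ m) (hn0 : 0 < n)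
    (hn : n ∣ 2 ^ m - 1)
    (α : F) (hα : orderOf α = n)
    (s : ℕ → F) (hper : ∀ t, s (t + n) = s t)
    (S : ℕ → F) (hS : ∀ k, S k = ∑ t ∈ Finset.range n, s t * α ^ (t * k)) :
    sInf {L : ℕ | ∃ c : Fin L → F,
        ∀ t, s (t + L) = ∑ i : Fin L, c i * s (t + (i : ℕ))} =
      ((Finset.range n).filter fun k => S k ≠ 0).card := by
  classical
  -- m is positive
  have hm : 0 < m := by
    have h1 := Fintype.one_lt_card (α := F)
    rw [hcard] at h1
    exact Nat.pos_of_ne_zero (Nat.one_lt_two_pow_iff.mp h1)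
  -- characteristic 2
  have h2F : (2 : F) = 0 := by
    have := FiniteField.cast_card_eq_zero F
    rw [hcard] at this
    have h2 : (2 : F) ^ m = 0 := by push_cast at this; exact this
    exact pow_eq_zero_iff hm.ne' |>.mp h2
  -- n is odd
  have hodd : n % 2 = 1 := by
    rcases hn with ⟨a, ha⟩
    rcases Nat.even_or_odd n with he | ho
    · exfalso
      obtain ⟨b, hb⟩ := he
      have h1 : (2:ℕ) ∣ 2 ^ m := dvd_pow_self 2 hm.ne'
      have h2 : (1:ℕ) ≤ 2 ^ m := Nat.one_le_two_pow
      have h3 : (2:ℕ) ∣ 2 ^ m - 1 := by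
        rw [ha]
        exact Dvd.dvd.mul_right ⟨b, by omega⟩ a
      omega
    · exact Nat.odd_iff.mp ho
  have hnF : (n : F) ≠ 0 := by
    have : n = 2 * (n / 2) + 1 := by omega
    rw [this]
    push_cast
    rw [h2F]
    simp
  -- basic facts about α and γ := α⁻¹
  have hαn : α ^ n = 1 := by rw [← hα]; exact pow_orderOf_eq_one α
  have hα0 : α ≠ 0 := by
    intro h
    rw [h, zero_pow hn0.ne'] at hαn
    exact zero_ne_one hαn
  set γ : F := α⁻¹ with hγ
  have hγn : γ ^ n = 1 := by rw [hγ, inv_pow, hαn, inv_one]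
  have hγ0 : γ ≠ 0 := inv_ne_zero hα0
  have hαinj : ∀ a b : ℕ, a < n → b < n → α ^ a = α ^ b → a = b := by
    intro a b ha hb hab
    have hu : orderOf (Units.mk0 α hα0) = n := by
      rw [← hα, ← orderOf_units, Units.val_mk0]
    have hpow : (Units.mk0 α hα0) ^ a = (Units.mk0 α hα0) ^ b := by
      ext
      simpa using hab
    have hmod := pow_eq_pow_iff_modEq.mp hpow
    rw [hu] at hmod
    rwa [Nat.ModEq, Nat.mod_eq_of_lt ha, Nat.mod_eq_of_lt hb] at hmod
  have hγinj : ∀ a b : ℕ, a < n → b < n → γ ^ a = γ ^ b → a = b := by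
    intro a b ha hb h
    rw [hγ, inv_pow, inv_pow] at h
    exact hαinj a b ha hb (inv_injective h)
  -- Fourier inversion (for t < n)
  have hinv : ∀ t, t < n → ∑ k ∈ Finset.range n, S k * γ ^ (t * k) = (n : F) * s t := by
    intro t ht
    calc ∑ k ∈ Finset.range n, S k * γ ^ (t * k)
        = ∑ k ∈ Finset.range n, ∑ u ∈ Finset.range n, s u * (α ^ u * γ ^ t) ^ k := by
          refine Finset.sum_congr rfl fun k _ => ?_
          rw [hS k, Finset.sum_mul]
          refine Finset.sum_congr rfl fun u _ => ?_
          rw [mul_pow, ← pow_mul, ← pow_mul, mul_assoc]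
      _ = ∑ u ∈ Finset.range n, s u * ∑ k ∈ Finset.range n, (α ^ u * γ ^ t) ^ k := by
          rw [Finset.sum_comm]
          simp [Finset.mul_sum]
      _ = (n : F) * s t := by
          rw [Finset.sum_eq_single t]
          · have h1 : α ^ t * γ ^ t = 1 := by
              rw [hγ, ← mul_pow, mul_inv_cancel₀ hα0, one_pow]
            rw [h1]
            simp [mul_comm]
          · intro u hu hut
            have hβn : (α ^ u * γ ^ t) ^ n = 1 := by
              rw [mul_pow, ← pow_mul, ← pow_mul, mul_comm u n, mul_comm t n,
                pow_mul, pow_mul, hαn, hγn, one_pow, one_pow, one_mul]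
            have hβ1 : α ^ u * γ ^ t ≠ 1 := by
              intro h
              rw [hγ, inv_pow, mul_inv_eq_one₀ (pow_ne_zero _ hα0)] at h
              exact hut (hαinj u t (Finset.mem_range.mp hu) ht h)
            rw [blahut_geom hβn hβ1, mul_zero]
          · intro h
            exact absurd (Finset.mem_range.mpr ht) h
  -- spectral representation of s
  set b : ℕ → F := fun k => (n : F)⁻¹ * S k with hb
  set E : Finset ℕ := (Finset.range n).filter (fun k => S k ≠ 0) with hE
  have hEn : ∀ k ∈ E, k < n := fun k hk => Finset.mem_range.mp (Finset.mem_filter.mp hk).1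
  have hbne : ∀ k ∈ E, b k ≠ 0 := fun k hk =>
    mul_ne_zero (inv_ne_zero hnF) (Finset.mem_filter.mp hk).2
  have hrep : ∀ t, s t = ∑ k ∈ E, b k * γ ^ (t * k) := by
    intro t
    have h1 : ∑ k ∈ E, b k * γ ^ (t * k) = ∑ k ∈ Finset.range n, b k * γ ^ (t * k) := by
      refine Finset.sum_subset (Finset.filter_subset _ _) ?_
      intro k hk hkE
      have hSk : S k = 0 := by
        by_contra h
        exact hkE (Finset.mem_filter.mpr ⟨hk, h⟩)
      simp [hb, hSk]
    rw [h1]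
    have ht' : t % n < n := Nat.mod_lt _ hn0
    have h2 : ∀ k, γ ^ (t * k) = γ ^ (t % n * k) := by
      intro k
      conv_lhs => rw [← Nat.mod_add_div' t n]
      have h5 : γ ^ (t / n * n * k) = 1 := by
        have h3 : t / n * n * k = n * (t / n * k) := by ring
        rw [h3, pow_mul, hγn, one_pow]
      rw [add_mul, pow_add, h5, mul_one]
    simp_rw [h2]
    have h4 : ∑ k ∈ Finset.range n, b k * γ ^ (t % n * k)
        = (n : F)⁻¹ * ∑ k ∈ Finset.range n, S k * γ ^ (t % n * k) := by
      rw [Finset.mul_sum]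
      exact Finset.sum_congr rfl fun k _ => by rw [hb]; ring
    rw [h4, hinv (t % n) ht', ← mul_assoc, inv_mul_cancel₀ hnF, one_mul]
    exact blahut_per hper t
  -- exponent identity
  have hpw : ∀ (a : F) (u v k : ℕ), a ^ ((u + v) * k) = a ^ (u * k) * (a ^ k) ^ v := by
    intro a u v k
    rw [add_mul, pow_add]
    congr 1
    rw [mul_comm v k, pow_mul]
  -- the complexity set
  set LS : Set ℕ := {L : ℕ | ∃ c : Fin L → F,
      ∀ t, s (t + L) = ∑ i : Fin L, c i * s (t + (i : ℕ))} with hLS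
  set w : ℕ := E.card with hw
  -- upper bound: w ∈ LS
  have hmem : w ∈ LS := by
    set p : Polynomial F := ∏ k ∈ E, (X - C (γ ^ k)) with hp
    have hmonic : p.Monic := monic_prod_of_monic _ _ fun k _ => monic_X_sub_C _
    have hdeg : p.natDegree = w := by
      rw [hp, natDegree_prod _ _ fun k _ => X_sub_C_ne_zero _]
      have h1 : ∀ x ∈ E, (X - C (γ ^ x)).natDegree = 1 := fun x _ => natDegree_X_sub_C (γ ^ x)
      rw [Finset.sum_congr rfl h1]
      simp [hw]
    refine ⟨fun i => -(p.coeff i), fun t => ?_⟩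
    have hroot : ∀ k ∈ E, (γ ^ k) ^ w = ∑ i : Fin w, -(p.coeff (i : ℕ)) * (γ ^ k) ^ (i : ℕ) := by
      intro k hk
      have h0 : p.eval (γ ^ k) = 0 := by
        rw [hp, eval_prod]
        refine Finset.prod_eq_zero hk ?_
        simp
      rw [eval_eq_sum_range, hdeg, Finset.sum_range_succ] at h0
      have hcw : p.coeff w = 1 := by rw [← hdeg]; exact hmonic.coeff_natDegree
      rw [hcw, one_mul] at h0
      rw [← Finset.sum_range (fun i => -(p.coeff i) * (γ ^ k) ^ i)]
      rw [show (∑ i ∈ Finset.range w, -(p.coeff i) * (γ ^ k) ^ i)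
          = -∑ i ∈ Finset.range w, p.coeff i * (γ ^ k) ^ i by
        simp [neg_mul, Finset.sum_neg_distrib]]
      linear_combination h0
    calc s (t + w) = ∑ k ∈ E, b k * γ ^ ((t + w) * k) := hrep _
      _ = ∑ k ∈ E, b k * γ ^ (t * k) * (γ ^ k) ^ w := by
          refine Finset.sum_congr rfl fun k _ => ?_
          rw [hpw γ t w k, ← mul_assoc]
      _ = ∑ k ∈ E, ∑ i : Fin w, -(p.coeff (i : ℕ)) * (b k * γ ^ ((t + (i : ℕ)) * k)) := by
          refine Finset.sum_congr rfl fun k hk => ?_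
          rw [hroot k hk, Finset.mul_sum]
          refine Finset.sum_congr rfl fun i _ => ?_
          rw [hpw γ t (i : ℕ) k]
          ring
      _ = ∑ i : Fin w, -(p.coeff (i : ℕ)) * ∑ k ∈ E, b k * γ ^ ((t + (i : ℕ)) * k) := by
          rw [Finset.sum_comm]
          simp [Finset.mul_sum]
      _ = ∑ i : Fin w, -(p.coeff (i : ℕ)) * s (t + (i : ℕ)) := by
          refine Finset.sum_congr rfl fun i _ => ?_
          rw [← hrep]
  -- lower bound
  have hlb : ∀ L ∈ LS, w ≤ L := by
    rintro L ⟨c, hc⟩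
    by_contra hWL
    push_neg at hWL
    rcases Nat.eq_zero_or_pos L with hL0 | hLpos
    · subst hL0
      have hs0 : ∀ t, s t = 0 := fun t => by simpa using hc t
      have hE0 : E = ∅ := by
        rw [hE, Finset.filter_eq_empty_iff]
        intro k _
        simp [hS k, hs0]
      rw [hw, hE0] at hWL
      simp at hWL
    set q : Polynomial F := X ^ L - ∑ i : Fin L, C (c i) * X ^ (i : ℕ) with hq
    have hrdeg : (∑ i : Fin L, C (c i) * X ^ (i : ℕ)).natDegree < L := by
      have h1 : (∑ i : Fin L, C (c i) * X ^ (i : ℕ)).natDegree ≤ L - 1 := by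
        refine Polynomial.natDegree_sum_le_of_forall_le _ _ fun i _ => ?_
        exact le_trans (Polynomial.natDegree_C_mul_X_pow_le _ _) (by omega)
      omega
    have hqdeg : q.natDegree = L := by
      rw [hq, Polynomial.natDegree_sub_eq_left_of_natDegree_lt
        (by rwa [natDegree_X_pow]), natDegree_X_pow]
    have hq0 : q ≠ 0 := fun h => by rw [h, natDegree_zero] at hqdeg; omega
    have hqe : ∀ x : F, q.eval x = x ^ L - ∑ i : Fin L, c i * x ^ (i : ℕ) := by
      intro x
      rw [hq, eval_sub, eval_pow, eval_X, Polynomial.eval_finset_sum]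
      simp
    -- key vanishing sums
    have hkey : ∀ t : ℕ, ∑ k ∈ E, (b k * q.eval (γ ^ k)) * (γ ^ k) ^ t = 0 := by
      intro t
      have h2 : ∑ k ∈ E, (b k * q.eval (γ ^ k)) * (γ ^ k) ^ t
          = s (t + L) - ∑ i : Fin L, c i * s (t + (i : ℕ)) := by
        simp only [hrep]
        simp_rw [Finset.mul_sum]
        rw [Finset.sum_comm, ← Finset.sum_sub_distrib]
        refine Finset.sum_congr rfl fun k _ => ?_
        rw [hqe, mul_sub, sub_mul, Finset.mul_sum, Finset.sum_mul]
        congr 1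
        · rw [hpw γ t L k]
          ring
        · refine Finset.sum_congr rfl fun i _ => ?_
          rw [hpw γ t (i : ℕ) k]
          ring
      rw [h2, hc t, sub_self]
    -- Vandermonde argument
    set e : {k // k ∈ E} ≃ Fin E.card := E.equivFin with he
    set x : Fin E.card → F := fun i => γ ^ ((e.symm i : ℕ)) with hx
    have hxinj : Function.Injective x := by
      intro i j hij
      have h1 : ((e.symm i : ℕ)) = ((e.symm j : ℕ)) :=
        hγinj _ _ (hEn _ (e.symm i).2) (hEn _ (e.symm j).2) hij
      have h2 : (e.symm i : {k // k ∈ E}) = e.symm j := Subtype.ext h1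
      exact e.symm.injective h2
    set M : Matrix (Fin E.card) (Fin E.card) F := (Matrix.vandermonde x).transpose with hM
    have hdet : M.det ≠ 0 := by
      rw [hM, Matrix.det_transpose, Matrix.det_vandermonde]
      rw [Finset.prod_ne_zero_iff]
      intro i _
      rw [Finset.prod_ne_zero_iff]
      intro j hj
      refine sub_ne_zero.mpr fun h => ?_
      exact (Finset.mem_Ioi.mp hj).ne' (hxinj h)
    set d : Fin E.card → F := fun i => b (e.symm i : ℕ) * q.eval (γ ^ ((e.symm i : ℕ))) with hd
    have hMd : M.mulVec d = 0 := by
      funext t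
      have hconv : ∑ i : Fin E.card, x i ^ (t : ℕ) * d i
          = ∑ k ∈ E, (b k * q.eval (γ ^ k)) * (γ ^ k) ^ (t : ℕ) := by
        rw [← Finset.sum_coe_sort E (fun k => (b k * q.eval (γ ^ k)) * (γ ^ k) ^ (t : ℕ))]
        rw [← Equiv.sum_comp e.symm
          (fun k : {k // k ∈ E} => (b (k : ℕ) * q.eval (γ ^ (k : ℕ))) * (γ ^ (k : ℕ)) ^ (t : ℕ))]
        refine Finset.sum_congr rfl fun i _ => ?_
        rw [hx, hd]
        ring
      simp only [hM, Matrix.mulVec, dotProduct, Matrix.transpose_apply,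
        Matrix.vandermonde, Matrix.of_apply, Pi.zero_apply]
      rw [hconv]
      exact hkey (t : ℕ)
    have hd0 : d = 0 := Matrix.eq_zero_of_mulVec_eq_zero hdet hMd
    have hroots : ∀ k ∈ E, q.eval (γ ^ k) = 0 := by
      intro k hk
      have hi := congrFun hd0 (e ⟨k, hk⟩)
      rw [hd] at hi
      simp only [Equiv.symm_apply_apply, Pi.zero_apply] at hi
      rcases mul_eq_zero.mp hi with h | h
      · exact absurd h (hbne k hk)
      · exact h
    have himg : (E.image fun k => γ ^ k) ⊆ q.roots.toFinset := by
      intro y hy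
      rw [Finset.mem_image] at hy
      obtain ⟨k, hk, rfl⟩ := hy
      rw [Multiset.mem_toFinset, Polynomial.mem_roots hq0]
      exact hroots k hk
    have hcardimg : (E.image fun k => γ ^ k).card = E.card :=
      Finset.card_image_of_injOn fun a ha b hb h => hγinj a b (hEn a ha) (hEn b hb) h
    have hfinal : E.card ≤ q.natDegree := by
      calc E.card = (E.image fun k => γ ^ k).card := hcardimg.symm
        _ ≤ q.roots.toFinset.card := Finset.card_le_card himg
        _ ≤ Multiset.card q.roots := Multiset.toFinset_card_le _
        _ ≤ q.natDegree := Polynomial.card_roots' q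
    rw [hqdeg] at hfinal
    omega
  exact le_antisymm (Nat.sInf_le hmem) (le_csInf ⟨w, hmem⟩ hlb)
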